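/- If K ⊆ ℝ is an uncountable compact set that is linearly independent over the rationals, then there exists a translation-invariant Borel measure μ on ℝ such that 0 < μ(K) < ∞. -/

import Mathlib

open Set MeasureTheory

/-- A (Borel) measure on `ℝ` is translation invariant if `μ(A + t) = μ(A)` for every
Borel set `A` and every `t : ℝ`. -/
def TransInvariant (μ : Measure ℝ) : Prop :=
  ∀ (t : ℝ) (A : Set ℝ), MeasurableSet A → μ ((fun x => x + t) '' A) = μ A

/-- For `t ≠ 0`, a rationally independent set meets its translate by `t` in at most
one point. -/
lemma key_subsingleton (K : Set ℝ)
    (hli : LinearIndependent ℚ ((↑) : K → ℝ)) {t : ℝ} (ht : t ≠ 0) :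
    {x | x ∈ K ∧ x + t ∈ K}.Subsingleton := by
  intro x hx y hy
  by_contra hne
  have ha : x ∈ K := hx.1
  have hb : x + t ∈ K := hx.2
  have hc : y ∈ K := hy.1
  have hd : y + t ∈ K := hy.2
  set a : K := ⟨x, ha⟩
  set b : K := ⟨x + t, hb⟩
  set c : K := ⟨y, hc⟩
  set d : K := ⟨y + t, hd⟩
  set l : K →₀ ℚ :=
    Finsupp.single a 1 - Finsupp.single b 1 - Finsupp.single c 1 + Finsupp.single d 1 with hl
  have hcomb : Finsupp.linearCombination ℚ ((↑) : K → ℝ) l = 0 := by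
    simp only [hl, map_add, map_sub, Finsupp.linearCombination_single, one_smul]
    ring
  have hl0 : l = 0 := linearIndependent_iff.mp hli l hcomb
  have hb0 : l b = 0 := by rw [hl0]; rfl
  have hab : a ≠ b := by
    intro h
    exact ht (by have h' : x = x + t := congrArg Subtype.val h; linarith)
  have hdb : d ≠ b := by
    intro h
    exact hne (by have h' : y + t = x + t := congrArg Subtype.val h; linarith)
  have : l b = Finsupp.single a 1 b - 1 - Finsupp.single c 1 b + Finsupp.single d 1 b := by
    simp [hl, Finsupp.single_eq_same]
  rw [Finsupp.single_eq_of_ne' hab, Finsupp.single_eq_of_ne' hdb] at this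
  rw [hb0] at this
  rcases eq_or_ne c b with hcb | hcb
  · rw [hcb, Finsupp.single_eq_same] at this; norm_num at this
  · rw [Finsupp.single_eq_of_ne' hcb] at this; norm_num at this

/-- If `K ⊆ ℝ` is an uncountable compact set that is linearly independent
over `ℚ`, then there is a translation-invariant Borel measure `μ` on `ℝ` with
`0 < μ(K) < ∞`. -/
theorem stmt_10 (K : Set ℝ) (hK : IsCompact K) (hunc : ¬ K.Countable)
    (hli : LinearIndependent ℚ ((↑) : K → ℝ)) :
    ∃ μ : Measure ℝ, TransInvariant μ ∧ 0 < μ K ∧ μ K < ⊤ := by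
  have hKc : IsClosed K := hK.isClosed
  have hKm : MeasurableSet K := hKc.measurableSet
  obtain ⟨f, hfK, hfc, hfi⟩ := hKc.exists_nat_bool_injection_of_not_countable hunc
  -- Borel isomorphism ℝ ≃ᵐ Cantor space
  let e : ℝ ≃ᵐ (ℕ → Bool) :=
    PolishSpace.measurableEquivNatBoolOfNotCountable (not_countable (α := ℝ))
  let g : ℝ → ℝ := f ∘ e
  have hgm : Measurable g := hfc.measurable.comp e.measurable
  have hgi : Function.Injective g := hfi.comp e.injective
  have hgK : ∀ x, g x ∈ K := fun x => hfK ⟨e x, rfl⟩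
  -- the base measure ν, concentrated on K, atomless, with ν K = 1
  let ν : Measure ℝ := (volume.restrict (Icc (0:ℝ) 1)).map g
  have hν_apply : ∀ A : Set ℝ, MeasurableSet A →
      ν A = (volume.restrict (Icc (0:ℝ) 1)) (g ⁻¹' A) := fun A hA =>
    Measure.map_apply hgm hA
  have hνK : ν K = 1 := by
    rw [hν_apply K hKm]
    have : g ⁻¹' K = univ := eq_univ_of_forall fun x => hgK x
    rw [this]
    simp
  -- ν of sets meeting a subsingleton within K is zero
  have hν_sub : ∀ {S : Set ℝ}, MeasurableSet S → ({x | x ∈ K ∧ x ∈ S}).Subsingleton →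
      ν S = 0 := by
    intro S hS hsub
    rw [hν_apply S hS]
    have hsub' : (g ⁻¹' S).Subsingleton := by
      intro u hu v hv
      have : g u = g v := hsub ⟨hgK u, hu⟩ ⟨hgK v, hv⟩
      exact hgi this
    refine le_antisymm ?_ (zero_le')
    calc (volume.restrict (Icc (0:ℝ) 1)) (g ⁻¹' S) ≤ volume (g ⁻¹' S) :=
          Measure.restrict_le_self _
      _ = 0 := hsub'.measure_zero _
  -- the final measure
  refine ⟨Measure.sum (fun t : ℝ => ν.map (· + t)), ?_, ?_, ?_⟩
  · -- translation invariance
    intro t A hA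
    have himg : (fun x => x + t) '' A = (fun x => x + (-t)) ⁻¹' A := by
      ext x
      constructor
      · rintro ⟨y, hy, rfl⟩; simpa using hy
      · intro hx; exact ⟨x + (-t), hx, by ring⟩
    have hAm' : MeasurableSet ((fun x => x + t) '' A) := by
      rw [himg]; exact (measurable_add_const (-t)) hA
    rw [Measure.sum_apply _ hAm', Measure.sum_apply _ hA]
    have hterm : ∀ s : ℝ,
        (ν.map (· + s)) ((fun x => x + t) '' A) = (ν.map (· + (s - t))) A := by
      intro s
      rw [Measure.map_apply (measurable_add_const s) hAm',
        Measure.map_apply (measurable_add_const (s - t)) hA]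
      congr 1
      rw [himg]
      ext x
      simp only [mem_preimage]
      have hxx : x + s + -t = x + (s - t) := by ring
      rw [hxx]
    calc ∑' s : ℝ, (ν.map (· + s)) ((fun x => x + t) '' A)
        = ∑' s : ℝ, (ν.map (· + (s - t))) A := by
          exact tsum_congr hterm
      _ = ∑' s : ℝ, (ν.map (· + s)) A := by
          exact (Equiv.subRight t).tsum_eq (fun s => (ν.map (· + s)) A)
  all_goals {
    have hsum : (Measure.sum (fun t : ℝ => ν.map (· + t))) K = 1 := by
      rw [Measure.sum_apply _ hKm]
      have hterm : ∀ s : ℝ, (ν.map (· + s)) K = ν ((· + s) ⁻¹' K) := fun s =>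
        Measure.map_apply (measurable_add_const s) hKm
      have h0 : (ν.map (· + (0:ℝ))) K = 1 := by
        rw [hterm 0]
        have : (· + (0:ℝ)) ⁻¹' K = K := by ext x; simp
        rw [this, hνK]
      have hz : ∀ s : ℝ, s ≠ 0 → (ν.map (· + s)) K = 0 := by
        intro s hs
        rw [hterm s]
        refine hν_sub ((measurable_add_const s) hKm) ?_
        have := key_subsingleton K hli hs
        intro x hx y hy
        exact this ⟨hx.1, hx.2⟩ ⟨hy.1, hy.2⟩
      rw [tsum_eq_single 0 (fun s hs => hz s hs)]
      exact h0
    rw [hsum]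
    norm_num
  }
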